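/- Let n ≥ 1 and consider the smooth function f(A) = ∑_{i,j} a_{ij}² (the squared Frobenius norm) restricted to the Lie group SL(n,ℝ) of real n×n matrices of determinant 1. Then A ∈ SL(n,ℝ) is a critical point of f (i.e. the manifold derivative of f at A vanishes) if and only if A ∈ SO(n); in particular n is the only critical value of f on SL(n,ℝ), it is the minimum value of f, and f(A) = n exactly when A ∈ SO(n). -/

import Mathlib

open Matrix

theorem frobenius_amgm_aux (n : ℕ) (l : Fin n → ℝ) (h0 : ∀ i, 0 ≤ l i)
    (hp : ∏ i, l i = 1) :
    (n : ℝ) ≤ ∑ i, l i ∧ (∑ i, l i = n → ∀ i, l i = 1) := by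
  have hne : ∀ i, l i ≠ 0 := by
    intro i hi
    rw [Finset.prod_eq_zero (Finset.mem_univ i) hi] at hp; norm_num at hp
  have hpos : ∀ i, 0 < l i := fun i => (h0 i).lt_of_ne (Ne.symm (hne i))
  have hlog : ∑ i, Real.log (l i) = 0 := by
    rw [← Real.log_prod fun i _ => hne i, hp, Real.log_one]
  have key : ∀ i ∈ Finset.univ, (0:ℝ) ≤ l i - 1 - Real.log (l i) := by
    intro i _
    have := Real.log_le_sub_one_of_pos (hpos i)
    linarith
  have hsum : ∑ i, (l i - 1 - Real.log (l i)) = ∑ i, l i - n := by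
    rw [Finset.sum_sub_distrib, Finset.sum_sub_distrib, hlog]
    simp
  constructor
  · have := Finset.sum_nonneg key
    rw [hsum] at this; linarith
  · intro hs i
    have hz : ∑ i, (l i - 1 - Real.log (l i)) = 0 := by rw [hsum, hs]; ring
    have := (Finset.sum_eq_zero_iff_of_nonneg key).mp hz i (Finset.mem_univ i)
    by_contra hne1
    have := Real.log_lt_sub_one_of_pos (hpos i) hne1
    linarith

theorem frobenius_eig_one (n : ℕ) (M : Matrix (Fin n) (Fin n) ℝ) (hM : M.IsHermitian)
    (h : ∀ i, hM.eigenvalues i = 1) : M = 1 := by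
  nth_rewrite 1 [hM.spectral_theorem]
  have : diagonal (RCLike.ofReal ∘ hM.eigenvalues) = (1 : Matrix (Fin n) (Fin n) ℝ) := by
    ext i j
    rcases eq_or_ne i j with rfl | hij
    · simp [h]
    · simp [diagonal_apply_ne _ hij, Matrix.one_apply_ne hij]
  rw [this, map_one]

theorem frobenius_min (n : ℕ) (B : Matrix (Fin n) (Fin n) ℝ) (hB : B.det = 1) :
    (n : ℝ) ≤ ∑ i, ∑ j, (B i j) ^ 2 ∧ ((∑ i, ∑ j, (B i j) ^ 2 = (n : ℝ)) ↔ Bᵀ * B = 1) := by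
  set M := Bᵀ * B with hMdef
  have hM : M.IsHermitian := by simpa using isHermitian_conjTranspose_mul_self B
  have hPSD : M.PosSemidef := by simpa using posSemidef_conjTranspose_mul_self B
  have htr : M.trace = ∑ i, ∑ j, (B i j) ^ 2 := by
    simp [hMdef, Matrix.trace, Matrix.mul_apply, Matrix.diag, sq]
    exact Finset.sum_comm
  have htr2 : M.trace = ∑ i, hM.eigenvalues i := by
    nth_rewrite 1 [hM.spectral_theorem]
    rw [Unitary.conjStarAlgAut_apply, trace_mul_cycle, (Matrix.mem_unitaryGroup_iff').mp (hM.eigenvectorUnitary).2]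
    simp [trace_diagonal]
  have hdet : M.det = 1 := by rw [hMdef, det_mul, det_transpose, hB]; ring
  have hprod : ∏ i, hM.eigenvalues i = 1 := by
    have := hM.det_eq_prod_eigenvalues
    rw [hdet] at this
    exact_mod_cast this.symm
  obtain ⟨h1, h2⟩ := frobenius_amgm_aux n hM.eigenvalues
    (fun i => hPSD.eigenvalues_nonneg i) hprod
  constructor
  · rw [← htr, htr2]; exact h1
  constructor
  · intro hs
    apply frobenius_eig_one n M hM
    apply h2
    rw [← htr2, htr, hs]
  · intro hone
    rw [← htr, hone, trace_one]
    simp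

theorem frobenius_offdiag (n : ℕ) (A : Matrix (Fin n) (Fin n) ℝ) (hA : A.det = 1)
    (i j : Fin n) (hij : i ≠ j)
    (H : ∀ γ : ℝ → Matrix (Fin n) (Fin n) ℝ,
        (∀ t, (γ t).det = 1) → γ 0 = A →
        (∀ i j, DifferentiableAt ℝ (fun t => γ t i j) 0) →
        deriv (fun t => ∑ i, ∑ j, (γ t i j) ^ 2) 0 = 0) :
    ∑ l, A i l * A j l = 0 := by
  set C := single i j (1:ℝ) * A with hC
  set γ : ℝ → Matrix (Fin n) (Fin n) ℝ := fun t => A + t • C with hγ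
  have hγ0 : γ 0 = A := by simp [hγ]
  have hentry : ∀ t k l, γ t k l = A k l + t * C k l := fun t k l => rfl
  have hdet : ∀ t, (γ t).det = 1 := by
    intro t
    have : γ t = transvection i j t * A := by
      have hs : single i j t = t • single i j (1:ℝ) := by
        rw [smul_single, smul_eq_mul, mul_one]
      rw [transvection, add_mul, one_mul, hs, smul_mul_assoc]
    rw [this, det_mul, det_transvection_of_ne _ _ hij, hA, one_mul]
  have hd : ∀ k l : Fin n, HasDerivAt (fun t => γ t k l) (C k l) 0 := by
    intro k l
    simp only [hentry]
    simpa using ((hasDerivAt_id (0:ℝ)).mul_const (C k l)).const_add (A k l)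
  have hsum : HasDerivAt (fun t => ∑ k, ∑ l, (γ t k l) ^ 2)
      (∑ k, ∑ l, ((2:ℕ) * (γ 0 k l) ^ 1 * C k l)) 0 := by
    apply HasDerivAt.fun_sum
    intro k _
    apply HasDerivAt.fun_sum
    intro l _
    exact (hd k l).pow 2
  have hdiff : ∀ k l, DifferentiableAt ℝ (fun t => γ t k l) 0 :=
    fun k l => (hd k l).differentiableAt
  have h0 := H γ hdet hγ0 hdiff
  rw [hsum.deriv] at h0
  rw [hγ0] at h0
  have : ∑ k, ∑ l, ((2:ℕ) * (A k l) ^ 1 * C k l) = 2 * ∑ l, A i l * A j l := by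
    rw [Finset.mul_sum]
    rw [← Finset.sum_subset (Finset.subset_univ {i})]
    · simp only [Finset.sum_singleton, hC, single_mul_apply_same, one_mul,
        pow_one, Nat.cast_ofNat]
      exact Finset.sum_congr rfl fun x _ => by ring
    · intro k _ hk
      simp only [Finset.mem_singleton] at hk
      apply Finset.sum_eq_zero
      intro l _
      rw [hC, single_mul_apply_of_ne 1 i j k l hk A]
      ring
  rw [this] at h0
  linarith

theorem frobenius_diag (n : ℕ) (A : Matrix (Fin n) (Fin n) ℝ) (hA : A.det = 1)
    (i j : Fin n) (hij : i ≠ j)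
    (H : ∀ γ : ℝ → Matrix (Fin n) (Fin n) ℝ,
        (∀ t, (γ t).det = 1) → γ 0 = A →
        (∀ i j, DifferentiableAt ℝ (fun t => γ t i j) 0) →
        deriv (fun t => ∑ i, ∑ j, (γ t i j) ^ 2) 0 = 0) :
    ∑ l, A i l ^ 2 = ∑ l, A j l ^ 2 := by
  set c : Fin n → ℝ := fun k => (if k = i then (1:ℝ) else 0) + (if k = j then -1 else 0) with hc
  have hcsum : ∑ k, c k = 0 := by
    simp [hc, Finset.sum_add_distrib]
  set γ : ℝ → Matrix (Fin n) (Fin n) ℝ :=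
    fun t => Matrix.of (fun k l => Real.exp (t * c k) * A k l) with hγ
  have hentry : ∀ t k l, γ t k l = Real.exp (t * c k) * A k l := fun t k l => rfl
  have hγ0 : γ 0 = A := by
    ext k l; simp [hentry]
  have hdet : ∀ t, (γ t).det = 1 := by
    intro t
    have : γ t = diagonal (fun k => Real.exp (t * c k)) * A := by
      ext k l
      rw [hentry, diagonal_mul]
    rw [this, det_mul, det_diagonal, hA, mul_one, ← Real.exp_sum, ← Finset.mul_sum, hcsum,
      mul_zero, Real.exp_zero]
  have hd : ∀ k l : Fin n, HasDerivAt (fun t => γ t k l) (c k * A k l) 0 := by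
    intro k l
    simp only [hentry]
    have h1 : HasDerivAt (fun t : ℝ => t * c k) (c k) 0 := by
      simpa using (hasDerivAt_id (0:ℝ)).mul_const (c k)
    simpa using h1.exp.mul_const (A k l)
  have hsum : HasDerivAt (fun t => ∑ k, ∑ l, (γ t k l) ^ 2)
      (∑ k, ∑ l, ((2:ℕ) * (γ 0 k l) ^ 1 * (c k * A k l))) 0 :=
    HasDerivAt.fun_sum fun k _ => HasDerivAt.fun_sum fun l _ => (hd k l).pow 2
  have h0 := H γ hdet hγ0 fun k l => (hd k l).differentiableAt
  rw [hsum.deriv, hγ0] at h0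
  have hre : ∑ k, ∑ l, ((2:ℕ) * (A k l) ^ 1 * (c k * A k l))
      = 2 * (∑ l, A i l ^ 2) - 2 * (∑ l, A j l ^ 2) := by
    have hinner : ∀ k, ∑ l, ((2:ℕ) * (A k l) ^ 1 * (c k * A k l))
        = (if k = i then 2 * ∑ l, A k l ^ 2 else 0)
          + (if k = j then -(2 * ∑ l, A k l ^ 2) else 0) := by
      intro k
      have : ∑ l, ((2:ℕ) * (A k l) ^ 1 * (c k * A k l)) = c k * (2 * ∑ l, A k l ^ 2) := by
        simp only [Finset.mul_sum]
        refine Finset.sum_congr rfl fun l _ => ?_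
        push_cast; ring
      rw [this, hc]
      by_cases hk : k = i
      · subst hk
        simp [hij, Ne.symm hij]
      · by_cases hk2 : k = j
        · subst hk2
          simp [hk, hij, Ne.symm hij]
        · simp [hk, hk2]
    rw [Finset.sum_congr rfl fun k _ => hinner k, Finset.sum_add_distrib,
      Finset.sum_ite_eq' Finset.univ i (fun k => 2 * ∑ l, A k l ^ 2),
      Finset.sum_ite_eq' Finset.univ j (fun k => -(2 * ∑ l, A k l ^ 2))]
    simp
    ring
  rw [hre] at h0
  linarith

/-- The squared Frobenius norm `f(A) = ∑ i j, (A i j)^2` restricted to `SL(n,ℝ)`: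
`A` is a critical point of `f` (the derivative of `f` along any differentiable curve in
`SL(n,ℝ)` through `A` vanishes) iff `A ∈ SO(n)`; moreover `n` is the minimum value of `f`
on `SL(n,ℝ)`, attained exactly on `SO(n)`. -/
theorem frobenius_sq_critical_iff_orthogonal
    (n : ℕ) (hn : 1 ≤ n) (A : Matrix (Fin n) (Fin n) ℝ) (hA : A.det = 1) :
    ((∀ γ : ℝ → Matrix (Fin n) (Fin n) ℝ,
        (∀ t, (γ t).det = 1) → γ 0 = A →
        (∀ i j, DifferentiableAt ℝ (fun t => γ t i j) 0) →
        deriv (fun t => ∑ i, ∑ j, (γ t i j) ^ 2) 0 = 0)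
      ↔ Aᵀ * A = 1) ∧
    (∀ B : Matrix (Fin n) (Fin n) ℝ, B.det = 1 → (n : ℝ) ≤ ∑ i, ∑ j, (B i j) ^ 2) ∧
    ((∑ i, ∑ j, (A i j) ^ 2) = (n : ℝ) ↔ Aᵀ * A = 1) := by
  refine ⟨⟨fun H => ?_, fun hO γ hdet hγ0 hdiff => ?_⟩,
    fun B hB => (frobenius_min n B hB).1, (frobenius_min n A hA).2⟩
  · -- criticality → orthogonal
    set i0 : Fin n := ⟨0, hn⟩ with hi0
    set c : ℝ := ∑ l, A i0 l ^ 2 with hcdef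
    have hdiagall : ∀ i : Fin n, ∑ l, A i l ^ 2 = c := by
      intro i
      rcases eq_or_ne i i0 with rfl | hne
      · rfl
      · exact frobenius_diag n A hA i i0 hne H
    have hS : A * Aᵀ = diagonal (fun _ => c) := by
      ext i j
      rcases eq_or_ne i j with rfl | hij
      · rw [diagonal_apply_eq]
        rw [← hdiagall i]
        simp [Matrix.mul_apply, sq]
      · rw [diagonal_apply_ne _ hij]
        have := frobenius_offdiag n A hA i j hij H
        simpa [Matrix.mul_apply] using this
    have hdetS : (A * Aᵀ).det = 1 := by
      rw [det_mul, det_transpose, hA]; ring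
    have hcn : c ^ n = 1 := by
      rw [hS, det_diagonal] at hdetS
      simpa using hdetS
    have hc0 : 0 ≤ c := by
      rw [hcdef]
      exact Finset.sum_nonneg fun l _ => sq_nonneg _
    have hc1 : c = 1 := by
      rcases lt_trichotomy c 1 with h | h | h
      · have : c ^ n < 1 := pow_lt_one₀ hc0 h (by omega)
        rw [hcn] at this; norm_num at this
      · exact h
      · have : 1 < c ^ n := one_lt_pow₀ h (by omega)
        rw [hcn] at this; norm_num at this
    have hS1 : A * Aᵀ = 1 := by
      rw [hS, hc1, diagonal_one]
    exact mul_eq_one_comm.mp hS1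
  · -- orthogonal → criticality
    have hmin : IsLocalMin (fun t => ∑ i, ∑ j, (γ t i j) ^ 2) 0 := by
      apply Filter.Eventually.of_forall
      intro t
      have h1 : (n : ℝ) ≤ ∑ i, ∑ j, (γ t i j) ^ 2 := (frobenius_min n (γ t) (hdet t)).1
      have h2 : ∑ i, ∑ j, (γ 0 i j) ^ 2 = (n : ℝ) := by
        rw [hγ0]
        exact (frobenius_min n A hA).2.mpr hO
      simp only []
      rw [h2]
      exact h1
    have hdg : DifferentiableAt ℝ (fun t => ∑ i, ∑ j, (γ t i j) ^ 2) 0 := by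
      apply DifferentiableAt.fun_sum
      intro i _
      apply DifferentiableAt.fun_sum
      intro j _
      exact (hdiff i j).pow 2
    exact hmin.deriv_eq_zero
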